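/- Let λ ∈ (0,1) and θ ∈ (0,∞) with θ ≠ 1/2 and θ ≠ 1. Let c be the unique zero of f(c) = (c/((2θ−1+2cθ)(2−2θ−c(2θ−1))))^((1−θ)/(θ−1/2)) − (2θ−1+2cθ)²/(1−λ) in I(θ), set s̄ = (c/((2θ−1+2cθ)(2−2θ−c(2θ−1))))^(1/(2θ−1)), and define g(s) = (−cs + (2θ−1+2cθ)s^(2θ))/(s − (2−2θ−c(2θ−1))s^(2θ)). Then g is twice differentiable on the closed interval with endpoints 1 and s̄ and satisfies there the ordinary differential equation g''(s) = 2·g'(s)²/(c + g(s)) − 2θ·g'(s)/s. -/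

import Mathlib

open Real

/-- The interval `I(θ)` in which the root `c` of `f` is located. -/
noncomputable def noTradeInterval (θ : ℝ) : Set ℝ :=
  if θ < 1/2 then Set.Ioi ((1 - θ)/θ)
  else if θ < 1 then Set.Ioo ((1 - θ)/θ) ((1 - θ)/(θ - 1/2))
  else Set.Ioo ((1 - θ)/θ) 0

lemma g_ode_aux (θ c a b : ℝ) (g : ℝ → ℝ) (hM : a - c*b ≠ 0)
    (hg : ∀ x : ℝ, g x = (-c*x + a * x ^ (2*θ)) / (x - b * x ^ (2*θ)))
    (U : Set ℝ) (hUo : IsOpen U)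
    (hU : ∀ x ∈ U, 0 < x ∧ x - b * x ^ (2*θ) ≠ 0)
    (s : ℝ) (hs : s ∈ U) :
    DifferentiableAt ℝ g s ∧ DifferentiableAt ℝ (deriv g) s ∧
      deriv (deriv g) s = 2 * (deriv g s)^2 / (c + g s) - 2*θ * deriv g s / s := by
  have hgf : g = fun x => (-c*x + a * x ^ (2*θ)) / (x - b * x ^ (2*θ)) := funext hg
  set G : ℝ → ℝ := fun x => (2*θ-1)*(a - c*b) * x ^ (2*θ) / (x - b * x ^ (2*θ))^2 with hGdef
  have key : ∀ x ∈ U, HasDerivAt g (G x) x := by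
    intro x hx
    obtain ⟨hx0, hxD⟩ := hU x hx
    have hxne : x ≠ 0 := ne_of_gt hx0
    have hrw : x ^ (2*θ - 1) = x ^ (2*θ) / x := by
      rw [Real.rpow_sub hx0, Real.rpow_one]
    have hN : HasDerivAt (fun y => -c*y + a * y ^ (2*θ))
        (-c + a * (2*θ * x ^ (2*θ - 1))) x := by
      have h1 : HasDerivAt (fun y : ℝ => -c*y) (-c) x := by
        simpa using (hasDerivAt_id x).const_mul (-c)
      exact h1.add ((Real.hasDerivAt_rpow_const (Or.inl hxne)).const_mul a)
    have hD : HasDerivAt (fun y => y - b * y ^ (2*θ))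
        (1 - b * (2*θ * x ^ (2*θ - 1))) x :=
      (hasDerivAt_id x).sub ((Real.hasDerivAt_rpow_const (Or.inl hxne)).const_mul b)
    have hdiv := hN.div hD hxD
    rw [hgf]
    refine hdiv.congr_deriv ?_
    rw [hGdef]
    simp only []
    rw [hrw]
    have ht0 : x ^ (2*θ) ≠ 0 := ne_of_gt (Real.rpow_pos_of_pos hx0 _)
    field_simp
    ring
  have hDg : ∀ x ∈ U, deriv g x = G x := fun x hx => (key x hx).deriv
  obtain ⟨hs0, hsD⟩ := hU s hs
  have hsne : s ≠ 0 := ne_of_gt hs0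
  have hev : deriv g =ᶠ[nhds s] G := Filter.eventuallyEq_of_mem (hUo.mem_nhds hs) hDg
  have hrw : s ^ (2*θ - 1) = s ^ (2*θ) / s := by
    rw [Real.rpow_sub hs0, Real.rpow_one]
  have hN : HasDerivAt (fun x : ℝ => (2*θ-1)*(a - c*b) * x ^ (2*θ))
      ((2*θ-1)*(a - c*b) * (2*θ * s ^ (2*θ-1))) s :=
    (Real.hasDerivAt_rpow_const (Or.inl hsne)).const_mul _
  have hDen : HasDerivAt (fun x : ℝ => (x - b * x ^ (2*θ))^2)
      (2 * (s - b * s ^ (2*θ)) * (1 - b * (2*θ * s ^ (2*θ-1)))) s := by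
    have h1 : HasDerivAt (fun y : ℝ => y - b * y ^ (2*θ))
        (1 - b * (2*θ * s ^ (2*θ - 1))) s :=
      (hasDerivAt_id s).sub ((Real.hasDerivAt_rpow_const (Or.inl hsne)).const_mul b)
    have h2 := h1.pow 2
    refine h2.congr_deriv ?_
    norm_num
  have hGd := hN.div hDen (pow_ne_zero 2 hsD)
  refine ⟨(key s hs).differentiableAt, (hev.differentiableAt_iff).mpr hGd.differentiableAt, ?_⟩
  rw [hev.deriv_eq, (show deriv G s = _ from hGd.deriv), hDg s hs, hg s]
  have hcg : c + (-c*s + a * s ^ (2*θ)) / (s - b * s ^ (2*θ))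
      = (a - c*b) * s ^ (2*θ) / (s - b * s ^ (2*θ)) := by
    rw [eq_div_iff hsD, add_mul, div_mul_cancel₀ _ hsD]
    ring
  rw [hcg, hGdef]
  simp only []
  rw [hrw]
  have ht0 : s ^ (2*θ) ≠ 0 := ne_of_gt (Real.rpow_pos_of_pos hs0 _)
  field_simp
  ring

theorem growth_optimal_g_ode
    (lam θ c sbar : ℝ) (g : ℝ → ℝ)
    (hlam : lam ∈ Set.Ioo (0:ℝ) 1) (hθ : 0 < θ) (hθhalf : θ ≠ 1/2) (hθone : θ ≠ 1)
    (hcI : c ∈ noTradeInterval θ)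
    (hfc : (c / ((2*θ - 1 + 2*c*θ) * (2 - 2*θ - c*(2*θ - 1)))) ^ ((1 - θ)/(θ - 1/2))
        - (2*θ - 1 + 2*c*θ)^2 / (1 - lam) = 0)
    (hsbar : sbar = (c / ((2*θ - 1 + 2*c*θ) * (2 - 2*θ - c*(2*θ - 1)))) ^ (1/(2*θ - 1)))
    (hg : ∀ s : ℝ, g s = (-c*s + (2*θ - 1 + 2*c*θ) * s ^ (2*θ))
        / (s - (2 - 2*θ - c*(2*θ - 1)) * s ^ (2*θ))) :
    ∀ s ∈ Set.uIcc (1:ℝ) sbar,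
      DifferentiableAt ℝ g s ∧ DifferentiableAt ℝ (deriv g) s ∧
        deriv (deriv g) s = 2 * (deriv g s)^2 / (c + g s) - 2*θ * deriv g s / s := by
  clear hfc hlam
  have hq : 2*θ - 1 ≠ 0 := fun h => hθhalf (by linarith)
  -- lower bound on c, valid in all cases
  have hlow : (1 - θ)/θ < c := by
    unfold noTradeInterval at hcI
    split_ifs at hcI with h1 h2
    · exact hcI
    · exact hcI.1
    · exact hcI.1
  have hθc : 1 - θ < c * θ := (div_lt_iff₀ hθ).mp hlow
  have hc1 : 0 < 1 + c := by nlinarith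
  have ha0 : 0 < 2*θ - 1 + 2*c*θ := by nlinarith
  have hane : (2*θ - 1 + 2*c*θ) ≠ 0 := ne_of_gt ha0
  have hM : (2*θ - 1 + 2*c*θ) - c*(2 - 2*θ - c*(2*θ - 1)) ≠ 0 := by
    have h : (2*θ - 1 + 2*c*θ) - c*(2 - 2*θ - c*(2*θ - 1)) = (2*θ-1)*(1+c)^2 := by ring
    rw [h]
    exact mul_ne_zero hq (pow_ne_zero 2 (by linarith))
  -- case facts
  have hkey : (0 < 2 - 2*θ - c*(2*θ - 1) ∧
      ((θ < 1/2 ∧ 1 < 2 - 2*θ - c*(2*θ - 1)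
          ∧ 1 < c / (2*θ - 1 + 2*c*θ)) ∨
       (1/2 < θ ∧ 2 - 2*θ - c*(2*θ - 1) < 1
          ∧ c / (2*θ - 1 + 2*c*θ) < 1))) ∨
      (1 < θ ∧ c < 0 ∧ 2 - 2*θ - c*(2*θ - 1) < 0) := by
    unfold noTradeInterval at hcI
    split_ifs at hcI with h1 h2
    · left
      have hmul : 0 < (1 - 2*θ) * (1 + c) := mul_pos (by linarith) hc1
      have hb1 : 1 < 2 - 2*θ - c*(2*θ - 1) := by nlinarith
      have hca : 2*θ - 1 + 2*c*θ < c := by nlinarith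
      exact ⟨by linarith, Or.inl ⟨h1, hb1, (one_lt_div ha0).mpr hca⟩⟩
    · left
      have hθh : 1/2 < θ := lt_of_le_of_ne (not_lt.mp h1) (Ne.symm hθhalf)
      have hub : c * (θ - 1/2) < 1 - θ := (lt_div_iff₀ (by linarith)).mp hcI.2
      have hmul : 0 < (2*θ - 1) * (1 + c) := mul_pos (by linarith) hc1
      have hb0 : 0 < 2 - 2*θ - c*(2*θ - 1) := by nlinarith
      have hb1 : 2 - 2*θ - c*(2*θ - 1) < 1 := by nlinarith
      have hca : c < 2*θ - 1 + 2*c*θ := by nlinarith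
      exact ⟨hb0, Or.inr ⟨hθh, hb1, (div_lt_one ha0).mpr hca⟩⟩
    · right
      have hθ1 : 1 < θ := lt_of_le_of_ne (not_lt.mp h2) (Ne.symm hθone)
      have hcneg : c < 0 := hcI.2
      exact ⟨hθ1, hcneg, by nlinarith⟩
  -- positivity of the ratio
  have hr : 0 < c / ((2*θ - 1 + 2*c*θ) * (2 - 2*θ - c*(2*θ - 1))) := by
    rcases hkey with ⟨hb0, hsub⟩ | ⟨hθ1, hcneg, hbneg⟩
    · have hc0 : 0 < c := by
        rcases hsub with ⟨hθh, _, _⟩ | ⟨hθh, _, _⟩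
        · exact lt_trans (div_pos (by linarith) hθ) hlow
        · rcases lt_or_ge θ 1 with h | h
          · exact lt_trans (div_pos (by linarith) hθ) hlow
          · nlinarith
      exact div_pos hc0 (mul_pos ha0 hb0)
    · exact div_pos_of_neg_of_neg hcneg (mul_neg_of_pos_of_neg ha0 hbneg)
  have hbne : (2 - 2*θ - c*(2*θ - 1)) ≠ 0 := by
    rcases hkey with ⟨hb0, _⟩ | ⟨_, _, hbneg⟩
    · exact ne_of_gt hb0
    · exact ne_of_lt hbneg
  have hsbar_pos : 0 < sbar := by
    rw [hsbar]; exact Real.rpow_pos_of_pos hr _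
  have hsbarq : sbar ^ (2*θ - 1)
      = c / ((2*θ - 1 + 2*c*θ) * (2 - 2*θ - c*(2*θ - 1))) := by
    rw [hsbar, ← Real.rpow_mul hr.le, one_div_mul_cancel hq, Real.rpow_one]
  have hbr : (2 - 2*θ - c*(2*θ - 1))
        * (c / ((2*θ - 1 + 2*c*θ) * (2 - 2*θ - c*(2*θ - 1))))
      = c / (2*θ - 1 + 2*c*θ) := by
    rw [mul_div_assoc', mul_comm (2*θ - 1 + 2*c*θ), mul_div_mul_left _ _ hbne]
  -- the interval is contained in the good region
  have hmain : ∀ x ∈ Set.uIcc (1:ℝ) sbar,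
      0 < x ∧ x - (2 - 2*θ - c*(2*θ - 1)) * x ^ (2*θ) ≠ 0 := by
    intro x hx
    rw [Set.mem_uIcc] at hx
    have hx0 : 0 < x := by
      rcases hx with ⟨h, _⟩ | ⟨h, _⟩
      · linarith
      · linarith
    have hxne : x ≠ 0 := ne_of_gt hx0
    have hsplit : x ^ (2*θ) = x * x ^ (2*θ - 1) := by
      have h := Real.rpow_add hx0 1 (2*θ - 1)
      have h2 : (1:ℝ) + (2*θ - 1) = 2*θ := by ring
      rw [h2, Real.rpow_one] at h
      exact h
    refine ⟨hx0, ?_⟩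
    rcases hkey with ⟨hb0, hsub⟩ | ⟨hθ1, hcneg, hbneg⟩
    · -- θ < 1 : write D = x * (1 - b x^(2θ-1)) and bound b x^(2θ-1) away from 1
      have hfact : x - (2 - 2*θ - c*(2*θ - 1)) * x ^ (2*θ)
          = x * (1 - (2 - 2*θ - c*(2*θ - 1)) * x ^ (2*θ - 1)) := by
        rw [hsplit]; ring
      rw [hfact]
      refine mul_ne_zero hxne ?_
      rcases hsub with ⟨hθh, hb1, hca⟩ | ⟨hθh, hb1, hca⟩
      · -- θ < 1/2 : exponent negative, b > 1, c/a > 1 : show 1 < b x^(2θ-1)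
        have hqneg : 2*θ - 1 ≤ 0 := by linarith
        have hgt : 1 < (2 - 2*θ - c*(2*θ - 1)) * x ^ (2*θ - 1) := by
          rcases hx with ⟨hl, hu⟩ | ⟨hl, hu⟩
          · have h1 := Real.rpow_le_rpow_of_nonpos hx0 hu hqneg
            rw [hsbarq] at h1
            calc (1:ℝ) < c / (2*θ - 1 + 2*c*θ) := hca
              _ = (2 - 2*θ - c*(2*θ - 1))
                  * (c / ((2*θ - 1 + 2*c*θ) * (2 - 2*θ - c*(2*θ - 1)))) := hbr.symm
              _ ≤ (2 - 2*θ - c*(2*θ - 1)) * x ^ (2*θ - 1) :=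
                  mul_le_mul_of_nonneg_left h1 hb0.le
          · have h1 := Real.rpow_le_rpow_of_nonpos hx0 hu hqneg
            rw [Real.one_rpow] at h1
            calc (1:ℝ) < 2 - 2*θ - c*(2*θ - 1) := hb1
              _ = (2 - 2*θ - c*(2*θ - 1)) * 1 := by ring
              _ ≤ (2 - 2*θ - c*(2*θ - 1)) * x ^ (2*θ - 1) :=
                  mul_le_mul_of_nonneg_left h1 hb0.le
        intro h0
        rw [sub_eq_zero] at h0
        exact absurd h0.symm (ne_of_gt hgt)
      · -- 1/2 < θ : exponent positive, b < 1, c/a < 1 : show b x^(2θ-1) < 1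
        have hqpos : (0:ℝ) ≤ 2*θ - 1 := by linarith
        have hlt : (2 - 2*θ - c*(2*θ - 1)) * x ^ (2*θ - 1) < 1 := by
          rcases hx with ⟨hl, hu⟩ | ⟨hl, hu⟩
          · have h1 := Real.rpow_le_rpow hx0.le hu hqpos
            rw [hsbarq] at h1
            calc (2 - 2*θ - c*(2*θ - 1)) * x ^ (2*θ - 1)
                ≤ (2 - 2*θ - c*(2*θ - 1))
                  * (c / ((2*θ - 1 + 2*c*θ) * (2 - 2*θ - c*(2*θ - 1)))) :=
                  mul_le_mul_of_nonneg_left h1 hb0.le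
              _ = c / (2*θ - 1 + 2*c*θ) := hbr
              _ < 1 := hca
          · have h1 := Real.rpow_le_rpow hx0.le hu hqpos
            rw [Real.one_rpow] at h1
            calc (2 - 2*θ - c*(2*θ - 1)) * x ^ (2*θ - 1)
                ≤ (2 - 2*θ - c*(2*θ - 1)) * 1 := mul_le_mul_of_nonneg_left h1 hb0.le
              _ = 2 - 2*θ - c*(2*θ - 1) := by ring
              _ < 1 := hb1
        intro h0
        rw [sub_eq_zero] at h0
        exact absurd h0 (ne_of_gt (by linarith))
    · -- θ > 1 : b < 0 so D > 0
      have hpow : 0 < x ^ (2*θ) := Real.rpow_pos_of_pos hx0 _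
      have : (2 - 2*θ - c*(2*θ - 1)) * x ^ (2*θ) < 0 := mul_neg_of_neg_of_pos hbneg hpow
      exact ne_of_gt (by linarith)
  -- the good region is open
  set U : Set ℝ := {x | 0 < x ∧ x - (2 - 2*θ - c*(2*θ - 1)) * x ^ (2*θ) ≠ 0} with hUdef
  have hUo : IsOpen U := by
    have hcont : ContinuousOn (fun x : ℝ => x - (2 - 2*θ - c*(2*θ - 1)) * x ^ (2*θ))
        (Set.Ioi (0:ℝ)) := by
      refine continuousOn_id.sub (continuousOn_const.mul ?_)
      intro x hx
      exact (Real.continuousAt_rpow_const x (2*θ) (Or.inl (ne_of_gt hx))).continuousWithinAt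
    have hopen := hcont.isOpen_inter_preimage isOpen_Ioi ((isOpen_compl_singleton : IsOpen ({(0:ℝ)}ᶜ)))
    have hUeq : U = Set.Ioi (0:ℝ) ∩
        (fun x : ℝ => x - (2 - 2*θ - c*(2*θ - 1)) * x ^ (2*θ)) ⁻¹' ({0}ᶜ) := by
      ext x
      simp [hUdef, Set.mem_Ioi, and_comm]
    rw [hUeq]
    exact hopen
  intro s hs
  exact g_ode_aux θ c (2*θ - 1 + 2*c*θ) (2 - 2*θ - c*(2*θ - 1)) g hM hg U hUo
    (fun x hx => hx) s (hmain s hs)
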